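/- Let f ∈ W^{1,p}_{δ}(ℝ^n \ B̄_1(0)) with p>n. Then there is a constant C (depending only on n, p, δ) such that |f(x)| ≤ C ‖f‖_{W^{1,p}_δ} σ(x)^{δ} for all x, where σ(x)=√(1+|x|²). -/

import Mathlib

open MeasureTheory Finset ENNReal
noncomputable section

/-- Euclidean space ℝⁿ. -/
abbrev Eu (n : ℕ) := EuclideanSpace ℝ (Fin n)

/-- The weight function σ(x) = √(1+|x|²). -/
def sg {n : ℕ} (x : Eu n) : ℝ := Real.sqrt (1 + ‖x‖^2)

/-- The exterior region {x : R < |x|}; for R = 1 this is ℝⁿ \ B̄₁(0). -/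
def ext (n : ℕ) (R : ℝ) : Set (Eu n) := {x | R < ‖x‖}

/-- Weighted Sobolev norm ‖u‖_{W^{k,p}_δ} = Σ_{j=0}^k ‖∇ʲu · σ^{-(δ-j)-n/p}‖_{L^p} on the
exterior region (each summand is ‖σ^{-(δ-j)-n/p} ∇ʲ u‖_{L^p}, written with exponents
multiplied out inside the integral). -/
def wnorm (n k : ℕ) (p δ R : ℝ) {F : Type} [NormedAddCommGroup F] [NormedSpace ℝ F]
    (u : Eu n → F) : ℝ≥0∞ :=
  ∑ j ∈ Finset.range (k+1),
    (∫⁻ x in ext n R,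
      ENNReal.ofReal (‖iteratedFDerivWithin ℝ j u (ext n R) x‖ ^ p
        * sg x ^ (((j : ℝ) - δ) * p - n))) ^ (1/p : ℝ)

/-- Membership in the weighted Sobolev space W^{k,p}_δ on the exterior region. -/
def memW (n k : ℕ) (p δ R : ℝ) {F : Type} [NormedAddCommGroup F] [NormedSpace ℝ F]
    (u : Eu n → F) : Prop :=
  ContDiffOn ℝ k u (ext n R) ∧ wnorm n k p δ R u < ⊤

/-! ### Auxiliary lemmas -/

section Aux

open Metric Set Real

lemma wse_sqrt_one_add_sq_le {a s : ℝ} (ha : 0 ≤ a) (hs : 0 ≤ s) :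
    Real.sqrt (1 + (a + s)^2) ≤ Real.sqrt (1 + a^2) + s := by
  have hu : a ≤ Real.sqrt (1 + a^2) := by
    nlinarith [Real.sq_sqrt (by positivity : (0:ℝ) ≤ 1 + a^2),
      Real.sqrt_nonneg (1 + a^2)]
  have h2 : 1 + (a+s)^2 ≤ (Real.sqrt (1 + a^2) + s)^2 := by
    have := Real.sq_sqrt (by positivity : (0:ℝ) ≤ 1 + a^2)
    nlinarith
  calc Real.sqrt (1 + (a+s)^2) ≤ Real.sqrt ((Real.sqrt (1+a^2) + s)^2) := Real.sqrt_le_sqrt h2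
    _ = _ := Real.sqrt_sq (by positivity)

lemma wse_rpow_ratio {a b s : ℝ} (ha : 0 < a) (h1 : a ≤ b) (h2 : b ≤ 2*a) :
    b ^ s ≤ 2 ^ |s| * a ^ s := by
  rcases le_or_gt 0 s with hs | hs
  · rw [abs_of_nonneg hs]
    calc b ^ s ≤ (2*a) ^ s := Real.rpow_le_rpow (by linarith) h2 hs
      _ = 2 ^ s * a ^ s := Real.mul_rpow (by norm_num) ha.le
  · rw [abs_of_neg hs]
    have h4 : b ^ s ≤ a ^ s := Real.rpow_le_rpow_of_nonpos ha h1 hs.le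
    have h3 : (1:ℝ) ≤ 2 ^ (-s) := Real.one_le_rpow (by norm_num) (by linarith)
    nlinarith [Real.rpow_nonneg (by linarith : (0:ℝ) ≤ a) s]

lemma wse_one_le_sg {n : ℕ} (x : Eu n) : 1 ≤ sg x := by
  rw [sg]
  have := Real.sqrt_le_sqrt (show (1:ℝ) ≤ 1 + ‖x‖^2 by nlinarith [sq_nonneg ‖x‖])
  simpa using this

lemma wse_sg_pos {n : ℕ} (x : Eu n) : 0 < sg x := lt_of_lt_of_le one_pos (wse_one_le_sg x)

lemma wse_sg_mono {n : ℕ} {x y : Eu n} (h : ‖x‖ ≤ ‖y‖) : sg x ≤ sg y := by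
  rw [sg, sg]
  apply Real.sqrt_le_sqrt
  nlinarith [norm_nonneg x]

lemma wse_sg_le_add {n : ℕ} {x z : Eu n} {m : ℝ} (h2 : ‖z‖ ≤ ‖x‖ + m) (hm : 0 ≤ m) :
    sg z ≤ sg x + m := by
  calc sg z ≤ Real.sqrt (1 + (‖x‖ + m)^2) := by
        rw [sg]; apply Real.sqrt_le_sqrt; nlinarith [norm_nonneg z, norm_nonneg x]
    _ ≤ sg x + m := wse_sqrt_one_add_sq_le (norm_nonneg x) hm

lemma wse_lint_homothety {n : ℕ} (F : Eu n → ℝ≥0∞) (hF : Measurable F) (x : Eu n) {t : ℝ}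
    (ht : 0 < t) :
    ∫⁻ z, F (x + t • (z - x)) = (ENNReal.ofReal (t ^ n))⁻¹ * ∫⁻ w, F w := by
  have h1 : ∀ z : Eu n, x + t • (z - x) = (x - t • x) + t • z := by
    intro z; rw [smul_sub]; abel
  simp_rw [h1]
  have hG : Measurable fun w : Eu n => F ((x - t • x) + w) :=
    hF.comp (measurable_const.add measurable_id)
  calc ∫⁻ z, F ((x - t • x) + t • z)
      = ∫⁻ w, F ((x - t • x) + w) ∂(Measure.map (t • ·) volume) := by
        rw [lintegral_map hG (measurable_const_smul t)]
    _ = ENNReal.ofReal |(t ^ Module.finrank ℝ (Eu n))⁻¹| * ∫⁻ w, F ((x - t•x) + w) := by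
        rw [Measure.map_addHaar_smul volume ht.ne', lintegral_smul_measure, smul_eq_mul]
    _ = (ENNReal.ofReal (t ^ n))⁻¹ * ∫⁻ w, F w := by
        rw [lintegral_add_left_eq_self (fun w => F w) (x - t•x)]
        congr 1
        rw [finrank_euclideanSpace_fin, abs_of_nonneg (by positivity),
          ENNReal.ofReal_inv_of_pos (by positivity)]

lemma wse_lintegral_Ioc_rpow {a : ℝ} (ha : -1 < a) :
    ∫⁻ t in Set.Ioc (0:ℝ) 1, ENNReal.ofReal (t ^ a) ≤ ENNReal.ofReal (1/(a+1)) := by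
  have hii : IntervalIntegrable (fun t : ℝ => t ^ a) volume 0 1 :=
    intervalIntegral.intervalIntegrable_rpow' ha
  have hInt : IntegrableOn (fun t : ℝ => t ^ a) (Set.Ioc 0 1) volume := by
    rwa [intervalIntegrable_iff_integrableOn_Ioc_of_le zero_le_one] at hii
  have hnn : 0 ≤ᵐ[volume.restrict (Set.Ioc (0:ℝ) 1)] fun t : ℝ => t ^ a := by
    filter_upwards [ae_restrict_mem measurableSet_Ioc] with t ht
    exact Real.rpow_nonneg ht.1.le a
  rw [← MeasureTheory.ofReal_integral_eq_lintegral_ofReal hInt hnn]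
  apply ENNReal.ofReal_le_ofReal
  have h5 : ∫ t in Set.Ioc (0:ℝ) 1, t ^ a = ∫ t in (0:ℝ)..1, t ^ a := by
    rw [intervalIntegral.integral_of_le zero_le_one]
  rw [h5, integral_rpow (Or.inl ha)]
  rw [Real.one_rpow, Real.zero_rpow (by linarith)]
  norm_num

lemma wse_ftc_bound {n : ℕ} {E : Set (Eu n)} (hE : IsOpen E) {f : Eu n → ℝ}
    (hreg : ContDiffOn ℝ 1 f E) (x z : Eu n)
    (hseg : ∀ t ∈ Set.Icc (0:ℝ) 1, x + t • (z - x) ∈ E) {m : ℝ} (hm : ‖z - x‖ ≤ m) :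
    ENNReal.ofReal |f x| ≤ ENNReal.ofReal |f z|
      + ∫⁻ t in Set.Ioc (0:ℝ) 1, ENNReal.ofReal (m * ‖fderiv ℝ f (x + t • (z - x))‖) := by
  set γ : ℝ → Eu n := fun t => x + t • (z - x) with hγ
  have hγcont : Continuous γ := by
    exact continuous_const.add ((continuous_id.smul continuous_const))
  have hdiffAt : ∀ y ∈ E, DifferentiableAt ℝ f y := fun y hy =>
    (hreg.differentiableOn one_ne_zero y hy).differentiableAt (hE.mem_nhds hy)
  have hDf_cont : ContinuousOn (fderiv ℝ f) E := hreg.continuousOn_fderiv_of_isOpen hE le_rfl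
  have hDc : ContinuousOn (fun t => (fderiv ℝ f (γ t)) (z - x)) (Set.Icc (0:ℝ) 1) := by
    apply ContinuousOn.clm_apply _ continuousOn_const
    exact (hDf_cont.comp hγcont.continuousOn (fun t ht => hseg t ht))
  have hNc : ContinuousOn (fun t => ‖fderiv ℝ f (γ t)‖) (Set.Icc (0:ℝ) 1) :=
    ((hDf_cont.comp hγcont.continuousOn (fun t ht => hseg t ht))).norm
  have hIcc : Set.uIcc (0:ℝ) 1 = Set.Icc 0 1 := Set.uIcc_of_le zero_le_one
  have key : f z - f x = ∫ t in (0:ℝ)..1, (fderiv ℝ f (γ t)) (z - x) := by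
    have h0 : f z = f (γ 1) := by simp [hγ]
    have h1 : f x = f (γ 0) := by simp [hγ]
    rw [h0, h1]
    refine (intervalIntegral.integral_eq_sub_of_hasDerivAt
      (f := fun t => f (γ t)) (f' := fun t => (fderiv ℝ f (γ t)) (z - x)) ?_ ?_).symm
    · intro t ht
      rw [Set.uIcc_of_le zero_le_one] at ht
      have hd : HasDerivAt γ (z - x) t := by
        have : HasDerivAt (fun s : ℝ => s • (z - x)) ((1:ℝ) • (z - x)) t :=
          (hasDerivAt_id t).smul_const (z - x)
        simpa [hγ, one_smul] using this.const_add x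
      exact ((hdiffAt (γ t) (hseg t ht)).hasFDerivAt.comp_hasDerivAt t hd)
    · exact ContinuousOn.intervalIntegrable (hIcc.symm ▸ hDc)
  -- real bound
  have habs : |f x| ≤ |f z| + ∫ t in (0:ℝ)..1, m * ‖fderiv ℝ f (γ t)‖ := by
    have h2 : |f x| ≤ |f z| + |∫ t in (0:ℝ)..1, (fderiv ℝ f (γ t)) (z - x)| := by
      have h3 : f x = f z - ∫ t in (0:ℝ)..1, (fderiv ℝ f (γ t)) (z - x) := by linarith
      rw [h3]
      exact (abs_sub _ _).trans (by rfl)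
    refine h2.trans (add_le_add_right ?_ _)
    calc |∫ t in (0:ℝ)..1, (fderiv ℝ f (γ t)) (z - x)|
        = ‖∫ t in (0:ℝ)..1, (fderiv ℝ f (γ t)) (z - x)‖ := (Real.norm_eq_abs _).symm
      _ ≤ ∫ t in (0:ℝ)..1, ‖(fderiv ℝ f (γ t)) (z - x)‖ :=
          intervalIntegral.norm_integral_le_integral_norm zero_le_one
      _ ≤ ∫ t in (0:ℝ)..1, m * ‖fderiv ℝ f (γ t)‖ := by
          apply intervalIntegral.integral_mono_on zero_le_one
          · exact ContinuousOn.intervalIntegrable (hIcc.symm ▸ hDc.norm)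
          · exact ContinuousOn.intervalIntegrable (hIcc.symm ▸ (continuousOn_const.mul hNc))
          · intro t ht
            calc ‖(fderiv ℝ f (γ t)) (z - x)‖ ≤ ‖fderiv ℝ f (γ t)‖ * ‖z - x‖ :=
                (fderiv ℝ f (γ t)).le_opNorm _
              _ ≤ m * ‖fderiv ℝ f (γ t)‖ := by
                  rw [mul_comm]
                  exact mul_le_mul_of_nonneg_right hm (norm_nonneg _)
  -- to lintegral
  have hInt : IntegrableOn (fun t => m * ‖fderiv ℝ f (γ t)‖) (Set.Ioc (0:ℝ) 1) volume := by
    have h4 : IntervalIntegrable (fun t => m * ‖fderiv ℝ f (γ t)‖) volume 0 1 :=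
      ContinuousOn.intervalIntegrable (hIcc.symm ▸ (continuousOn_const.mul hNc))
    rwa [intervalIntegrable_iff_integrableOn_Ioc_of_le zero_le_one] at h4
  have hm0 : 0 ≤ m := le_trans (norm_nonneg _) hm
  calc ENNReal.ofReal |f x|
      ≤ ENNReal.ofReal (|f z| + ∫ t in (0:ℝ)..1, m * ‖fderiv ℝ f (γ t)‖) :=
        ENNReal.ofReal_le_ofReal habs
    _ ≤ ENNReal.ofReal |f z|
        + ENNReal.ofReal (∫ t in (0:ℝ)..1, m * ‖fderiv ℝ f (γ t)‖) := ENNReal.ofReal_add_le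
    _ ≤ _ := by
        gcongr
        rw [intervalIntegral.integral_of_le zero_le_one]
        rw [MeasureTheory.ofReal_integral_eq_lintegral_ofReal hInt
          (by filter_upwards with t using by positivity)]

lemma wse_holder_one {α : Type*} [MeasurableSpace α] (μ : Measure α) {p q : ℝ}
    (hpq : p.HolderConjugate q) {g : α → ℝ≥0∞} (hg : AEMeasurable g μ) :
    ∫⁻ a, g a ∂μ ≤ (∫⁻ a, g a ^ p ∂μ) ^ (1/p) * (μ Set.univ) ^ (1/q) := by
  have h := ENNReal.lintegral_mul_le_Lp_mul_Lq μ hpq hg (aemeasurable_const (b := (1:ℝ≥0∞)))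
  simpa [ENNReal.one_rpow, lintegral_one] using h

lemma wse_rpow_factor {S K b p : ℝ} (hS : 0 < S) (hK : 0 < K) (hp : 0 < p) :
    S ^ (-δ') * (K * S ^ b) ^ (1/p) = K ^ (1/p) * S ^ (-δ' + b * (1/p)) := by
  rw [Real.mul_rpow hK.le (Real.rpow_nonneg hS.le b), ← Real.rpow_mul hS.le,
    Real.rpow_add hS]
  ring

lemma wse_key_exp {p q : ℝ} (hp0 : 0 < p) (hq0 : 0 < q) (hpq1 : 1/p + 1/q = 1) (n : ℕ)
    {S w : ℝ} (hS : 0 < S) (hw : 0 < w) :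
    S ^ ((n:ℝ)/p) * ((S/8)^n * w) ^ (1/q) =
      (8 ^ ((n:ℝ)/p) * w ^ (-(1/p))) * ((S/8)^n * w) := by
  have h8 : (0:ℝ) < S/8 := by positivity
  have hL : 0 < S ^ ((n:ℝ)/p) * ((S/8)^n * w) ^ (1/q) := by positivity
  have hR : 0 < (8 ^ ((n:ℝ)/p) * w ^ (-(1/p))) * ((S/8)^n * w) := by positivity
  apply Real.log_injOn_pos (Set.mem_Ioi.mpr hL) (Set.mem_Ioi.mpr hR)
  have e1 : Real.log (((S/8)^n * w) ^ ((1:ℝ)/q))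
      = (1/q)*((n:ℝ)*(Real.log S - Real.log 8) + Real.log w) := by
    rw [Real.log_rpow (by positivity), Real.log_mul (by positivity : (0:ℝ) < (S/8)^n).ne'
      hw.ne', Real.log_pow, Real.log_div hS.ne' (by norm_num : (8:ℝ) ≠ 0)]
  have e2 : Real.log ((8:ℝ) ^ ((n:ℝ)/p) * w ^ (-(1/p)))
      = ((n:ℝ)/p)*Real.log 8 + (-(1/p))*Real.log w := by
    rw [Real.log_mul (by positivity : ((8:ℝ) ^ ((n:ℝ)/p)) ≠ 0)
      (by positivity : (w ^ (-(1/p):ℝ)) ≠ 0),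
      Real.log_rpow (by norm_num : (0:ℝ) < 8), Real.log_rpow hw]
  have e3 : Real.log ((S/8)^n * w) = (n:ℝ)*(Real.log S - Real.log 8) + Real.log w := by
    rw [Real.log_mul (by positivity : (0:ℝ) < (S/8)^n).ne' hw.ne', Real.log_pow,
      Real.log_div hS.ne' (by norm_num : (8:ℝ) ≠ 0)]
  rw [Real.log_mul (ne_of_gt (by positivity)) (ne_of_gt (by positivity)),
    Real.log_mul (ne_of_gt (by positivity)) (ne_of_gt (by positivity)),
    Real.log_rpow hS, e1, e2, e3]
  linear_combination ((n:ℝ)*Real.log S - (n:ℝ)*Real.log 8 + Real.log w) * hpq1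

end Aux

open Metric Set in
set_option maxHeartbeats 2000000 in
/-- weighted Sobolev embedding. For f ∈ W^{1,p}_δ(ℝⁿ \ B̄₁(0)) with p > n,
there is a constant C (depending only on n, p, δ) such that
|f(x)| ≤ C ‖f‖_{W^{1,p}_δ} σ(x)^δ for all x in the exterior region, i.e.
|f(x)| σ(x)^{-δ} ≤ C ‖f‖_{W^{1,p}_δ}. -/
theorem weighted_sobolev_embedding (n : ℕ) (p δ : ℝ) (hp : (n : ℝ) < p) :
    ∃ C > (0:ℝ), ∀ f : Eu n → ℝ, memW n 1 p δ 1 f →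
      ∀ x ∈ ext n 1,
        ENNReal.ofReal (|f x| * sg x ^ (-δ)) ≤ ENNReal.ofReal C * wnorm n 1 p δ 1 f := by
  rcases Nat.eq_zero_or_pos n with hn0 | hn1
  · subst hn0
    refine ⟨1, one_pos, fun f hf x hx => ?_⟩
    have h1 : ‖x‖ = 0 := by
      rw [EuclideanSpace.norm_eq]
      simp
    have h2 : (1:ℝ) < ‖x‖ := hx
    rw [h1] at h2; norm_num at h2
  -- main case
  haveI hNT : Nontrivial (Eu n) := by
    refine ⟨0, EuclideanSpace.single ⟨0, hn1⟩ 1, fun h => ?_⟩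
    have h2 := congrArg (fun v : Eu n => v ⟨0, hn1⟩) h
    simp [EuclideanSpace.single_apply] at h2
  set E : Set (Eu n) := ext n 1 with hEdef
  have hE : IsOpen E := isOpen_lt continuous_const continuous_norm
  have hEm : MeasurableSet E := hE.measurableSet
  have hp1 : 1 < p := lt_of_le_of_lt (by exact_mod_cast hn1) hp
  have hp0 : 0 < p := lt_trans one_pos hp1
  have hnp1 : (n:ℝ)/p < 1 := (div_lt_one hp0).mpr hp
  set q : ℝ := Real.conjExponent p with hqdef
  have hpq : p.HolderConjugate q := Real.HolderConjugate.conjExponent hp1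
  have hq0 : 0 < q := hpq.symm.pos
  have hq1 : 1/p + 1/q = 1 := by
    have := hpq.inv_add_inv_eq_one
    rw [one_div, one_div]; linarith
  set ω : ℝ≥0∞ := volume (Metric.ball (0 : Eu n) 1) with hωdef
  have hω0 : ω ≠ 0 := (measure_ball_pos volume 0 one_pos).ne'
  have hωt : ω ≠ ⊤ := measure_ball_lt_top.ne
  set w : ℝ := ω.toReal with hwdef
  have hw : 0 < w := ENNReal.toReal_pos hω0 hωt
  have hωw : ω = ENNReal.ofReal w := (ENNReal.ofReal_toReal hωt).symm
  set jc : ℝ := 1/(-((n:ℝ)/p)+1) with hjcdef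
  have hjc : 0 < jc := by
    rw [hjcdef]; apply one_div_pos.mpr; linarith
  set b0 : ℝ := δ*p + n with hb0def
  set b1 : ℝ := δ*p - p + n with hb1def
  set K0 : ℝ := 2 ^ |b0| with hK0def
  set K1 : ℝ := 2 ^ |b1| with hK1def
  have hK0 : 0 < K0 := Real.rpow_pos_of_pos (by norm_num) _
  have hK1 : 0 < K1 := Real.rpow_pos_of_pos (by norm_num) _
  set c8 : ℝ := 8 ^ ((n:ℝ)/p) * w ^ (-(1/p)) with hc8def
  have hc8 : 0 < c8 := by positivity
  set C0 : ℝ := K0^(1/p) * c8 with hC0def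
  set C1 : ℝ := (jc/4) * K1^(1/p) * c8 with hC1def
  have hC0p : 0 < C0 := by positivity
  have hC1p : 0 < C1 := by positivity
  refine ⟨C0 + C1, by positivity, ?_⟩
  intro f hf x hx
  obtain ⟨hreg, hfin⟩ := hf
  -- derivative data
  have hDf_cont : ContinuousOn (fderiv ℝ f) E := hreg.continuousOn_fderiv_of_isOpen hE le_rfl
  have hGm : Measurable fun y : Eu n => ENNReal.ofReal ‖fderiv ℝ f y‖ :=
    ENNReal.measurable_ofReal.comp (measurable_fderiv ℝ f).norm
  have hsgc : Continuous (sg (n := n)) := by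
    unfold sg
    exact (continuous_const.add ((continuous_norm).pow 2)).sqrt
  -- integrals
  set e0 : ℝ := (((0:ℕ):ℝ) - δ) * p - n with he0def
  set e1 : ℝ := (((1:ℕ):ℝ) - δ) * p - n with he1def
  have he0 : -e0 = b0 := by rw [he0def, hb0def]; push_cast; ring
  have he1 : -e1 = b1 := by rw [he1def, hb1def]; push_cast; ring
  set I0 : ℝ≥0∞ := ∫⁻ y in E, ENNReal.ofReal (|f y| ^ p * sg y ^ e0) with hI0def
  set I1 : ℝ≥0∞ := ∫⁻ y in E, ENNReal.ofReal (‖fderiv ℝ f y‖ ^ p * sg y ^ e1) with hI1def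
  have hWnorm : wnorm n 1 p δ 1 f = I0 ^ (1/p:ℝ) + I1 ^ (1/p:ℝ) := by
    rw [wnorm, Finset.sum_range_succ, Finset.sum_range_one]
    congr 1
    · congr 1
      refine setLIntegral_congr_fun hEm (fun y hy => ?_)
      rw [norm_iteratedFDerivWithin_zero, Real.norm_eq_abs]
    · congr 1
      refine setLIntegral_congr_fun hEm (fun y hy => ?_)
      have h2 := norm_iteratedFDerivWithin_fderivWithin (𝕜 := ℝ) (f := f) (n := 0)
        (s := E) (x := y) hE.uniqueDiffOn hy
      rw [norm_iteratedFDerivWithin_zero, fderivWithin_of_isOpen hE hy] at h2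
      rw [show (0+1 : ℕ) = 1 from rfl] at h2
      rw [← h2]
  have hfinI1 : I1 ^ (1/p:ℝ) ≠ ⊤ := by
    intro hcon
    rw [hWnorm, hcon] at hfin
    simp at hfin
  -- geometry
  have hx1 : (1:ℝ) < ‖x‖ := hx
  have hx0 : (0:ℝ) < ‖x‖ := lt_trans one_pos hx1
  set S : ℝ := sg x with hSdef
  have hS1 : 1 ≤ S := wse_one_le_sg x
  have hS0 : 0 < S := lt_of_lt_of_le one_pos hS1
  set r : ℝ := S/8 with hr8
  have hr : 0 < r := by positivity
  set c : Eu n := x + (r/‖x‖) • x with hcdef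
  set B : Set (Eu n) := Metric.ball c r with hBdef
  have hc2 : c = (1 + r/‖x‖) • x := by rw [hcdef, add_smul, one_smul]
  have hnc : ‖c‖ = ‖x‖ + r := by
    rw [hc2, norm_smul, Real.norm_eq_abs, abs_of_pos (by positivity)]
    field_simp
  have hxc : dist x c = r := by
    rw [dist_eq_norm, show x - c = -((r/‖x‖) • x) by rw [hcdef]; abel, norm_neg, norm_smul,
      Real.norm_eq_abs, abs_of_pos (by positivity)]
    field_simp
  have hBsub : ∀ z ∈ B, ‖x‖ < ‖z‖ := by
    intro z hz
    have h3 : dist z c < r := hz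
    have h4 : ‖c‖ - ‖z‖ ≤ ‖c - z‖ := by
      have := norm_sub_norm_le c z; linarith
    rw [← dist_eq_norm, dist_comm] at h4
    linarith [hnc]
  have hBE : B ⊆ E := fun z hz => show (1:ℝ) < ‖z‖ from lt_trans hx1 (hBsub z hz)
  have hzx2r : ∀ z ∈ B, ‖z - x‖ ≤ 2*r := by
    intro z hz
    have h3 : dist z x ≤ dist z c + dist c x := dist_triangle z c x
    rw [dist_comm c x] at h3
    rw [← dist_eq_norm]
    have h5 : dist z c < r := hz
    linarith [hxc]
  have hsgB : ∀ z ∈ B, S ≤ sg z ∧ sg z ≤ 2*S := by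
    intro z hz
    refine ⟨wse_sg_mono (hBsub z hz).le, ?_⟩
    have h5 : ‖z‖ ≤ ‖x‖ + 2*r := by
      have h6 : ‖z‖ ≤ ‖x‖ + ‖z - x‖ := by
        have := norm_add_le x (z - x); simpa using this
      linarith [hzx2r z hz]
    have h7 := wse_sg_le_add h5 (by positivity)
    rw [← hSdef] at h7
    rw [hr8] at h7
    linarith
  have hsegB : ∀ z ∈ B, ∀ t ∈ Set.Ioc (0:ℝ) 1, x + t • (z - x) ∈ B := by
    intro z hz t ht
    have h6 : x + t • (z - x) - c = (1-t) • (x - c) + t • (z - c) := by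
      module
    have h5 : dist z c < r := hz
    rw [hBdef, Metric.mem_ball, dist_eq_norm, h6]
    calc ‖(1-t) • (x - c) + t • (z - c)‖ ≤ ‖(1-t) • (x - c)‖ + ‖t • (z - c)‖ := norm_add_le _ _
      _ = (1-t)*‖x - c‖ + t*‖z - c‖ := by
          rw [norm_smul, norm_smul, Real.norm_eq_abs, Real.norm_eq_abs,
            abs_of_nonneg (by linarith [ht.2]), abs_of_nonneg ht.1.le]
      _ < r := by
          have h7 : ‖x - c‖ = r := by rw [← dist_eq_norm]; exact hxc
          have h8 : ‖z - c‖ < r := by rw [← dist_eq_norm]; exact h5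
          rw [h7]
          have h9 : t*‖z - c‖ < t*r := mul_lt_mul_of_pos_left h8 ht.1
          have h10 : (1-t)*r + t*r = r := by ring
          linarith
  have hsegE : ∀ z ∈ B, ∀ t ∈ Set.Icc (0:ℝ) 1, x + t • (z - x) ∈ E := by
    intro z hz t ht
    rcases eq_or_lt_of_le ht.1 with h|h
    · have : x + t • (z - x) = x := by rw [← h]; simp
      rw [this]; exact hx
    · exact hBE (hsegB z hz t ⟨h, ht.2⟩)
  -- volume
  have hV : volume B = ENNReal.ofReal (r^n * w) := by
    rw [hBdef, Measure.addHaar_ball (volume : Measure (Eu n)) c hr.le,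
      finrank_euclideanSpace_fin, ← hωdef, hωw, ← ENNReal.ofReal_mul (by positivity)]
  have hV0 : volume B ≠ 0 := by
    rw [hV]; exact (ENNReal.ofReal_pos.mpr (by positivity)).ne'
  have hVt : volume B ≠ ⊤ := by rw [hV]; exact ENNReal.ofReal_ne_top
  -- measurability
  have hfB : AEMeasurable (fun z => ENNReal.ofReal |f z|) (volume.restrict B) := by
    have h1 : AEMeasurable f (volume.restrict B) :=
      (hreg.continuousOn.mono hBE).aemeasurable measurableSet_ball
    have h2 : AEMeasurable (fun z => |f z|) (volume.restrict B) := by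
      simpa [Real.norm_eq_abs] using h1.norm
    exact ENNReal.measurable_ofReal.comp_aemeasurable h2

  have hWm : Measurable (Set.indicator B
      (fun y => ENNReal.ofReal (‖fderiv ℝ f y‖^p * sg y^e1))) := by
    apply Measurable.indicator _ measurableSet_ball
    apply ENNReal.measurable_ofReal.comp
    apply Measurable.mul
    · exact (Real.continuous_rpow_const hp0.le).measurable.comp (measurable_fderiv ℝ f).norm
    · exact (hsgc.rpow_const fun y => Or.inl (wse_sg_pos y).ne').measurable
  set G : Eu n → ℝ≥0∞ := fun y => ENNReal.ofReal ‖fderiv ℝ f y‖ with hGdef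
  set Wi : Eu n → ℝ≥0∞ :=
    Set.indicator B (fun y => ENNReal.ofReal (‖fderiv ℝ f y‖^p * sg y^e1)) with hWidef
  -- step 1: integrate the FTC bound over the ball
  have hstep1 : volume B * ENNReal.ofReal |f x| ≤
      (∫⁻ z in B, ENNReal.ofReal |f z|)
      + ∫⁻ z in B, ∫⁻ t in Set.Ioc (0:ℝ) 1,
          ENNReal.ofReal (2*r * ‖fderiv ℝ f (x + t • (z - x))‖) := by
    have h0 : volume B * ENNReal.ofReal |f x| = ∫⁻ _ in B, ENNReal.ofReal |f x| := by
      rw [setLIntegral_const, mul_comm]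
    rw [h0]
    calc ∫⁻ _ in B, ENNReal.ofReal |f x|
        ≤ ∫⁻ z in B, (ENNReal.ofReal |f z|
            + ∫⁻ t in Set.Ioc (0:ℝ) 1,
                ENNReal.ofReal (2*r * ‖fderiv ℝ f (x + t • (z - x))‖)) := by
          refine setLIntegral_mono' measurableSet_ball fun z hz => ?_
          exact wse_ftc_bound hE hreg x z (hsegE z hz) (hzx2r z hz)
      _ = _ := lintegral_add_left' hfB _
  -- swap the two integrals
  have hψ : Continuous fun zt : Eu n × ℝ => x + zt.2 • (zt.1 - x) :=
    continuous_const.add (continuous_snd.smul (continuous_fst.sub continuous_const))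
  have hswap : (∫⁻ z in B, ∫⁻ t in Set.Ioc (0:ℝ) 1,
        ENNReal.ofReal (2*r * ‖fderiv ℝ f (x + t • (z - x))‖))
      = ∫⁻ t in Set.Ioc (0:ℝ) 1, ∫⁻ z in B,
          ENNReal.ofReal (2*r * ‖fderiv ℝ f (x + t • (z - x))‖) := by
    apply lintegral_lintegral_swap
    apply Measurable.aemeasurable
    exact ENNReal.measurable_ofReal.comp
      (measurable_const.mul ((measurable_fderiv ℝ f).norm.comp hψ.measurable))
  -- per-t estimate
  set D : ℝ≥0∞ := (ENNReal.ofReal (K1 * S^b1))^(1/p:ℝ) * I1^(1/p:ℝ)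
      * (volume B)^(1/q:ℝ) * ENNReal.ofReal (2*r) with hDdef
  have hper : ∀ t ∈ Set.Ioc (0:ℝ) 1,
      (∫⁻ z in B, ENNReal.ofReal (2*r * ‖fderiv ℝ f (x + t • (z - x))‖))
        ≤ ENNReal.ofReal (t ^ (-((n:ℝ)/p))) * D := by
    intro t ht
    have ht0 : 0 < t := ht.1
    have hφB : ∀ z ∈ B, x + t • (z - x) ∈ B := fun z hz => hsegB z hz t ht
    have hGφm : Measurable fun z : Eu n => G (x + t • (z - x)) :=
      hGm.comp (by fun_prop :
          Continuous fun z : Eu n => x + t • (z - x)).measurable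
    have h1 : (∫⁻ z in B, ENNReal.ofReal (2*r * ‖fderiv ℝ f (x + t • (z - x))‖))
        = ENNReal.ofReal (2*r) * ∫⁻ z in B, G (x + t • (z - x)) := by
      simp_rw [ENNReal.ofReal_mul (show (0:ℝ) ≤ 2*r by positivity)]
      exact lintegral_const_mul' _ _ ENNReal.ofReal_ne_top
    have hpw : ∀ z ∈ B, (G (x + t • (z - x)))^(p:ℝ)
        ≤ ENNReal.ofReal (K1 * S^b1) * Wi (x + t • (z - x)) := by
      intro z hz
      have hyB : x + t • (z - x) ∈ B := hφB z hz
      set y : Eu n := x + t • (z - x) with hydef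
      have hWiy : Wi y = ENNReal.ofReal (‖fderiv ℝ f y‖^p * sg y^e1) := by
        rw [hWidef]; exact Set.indicator_of_mem hyB _
      rw [hWiy, hGdef]
      rw [ENNReal.ofReal_rpow_of_nonneg (norm_nonneg _) hp0.le]
      rw [← ENNReal.ofReal_mul (mul_nonneg hK1.le (Real.rpow_nonneg hS0.le _))]
      apply ENNReal.ofReal_le_ofReal
      have hs := hsgB y hyB
      have hK1' : K1 = 2 ^ |(-e1)| := by rw [hK1def, ← he1]
      have hratio : sg y ^ (-e1) ≤ K1 * S ^ (-e1) := by
        rw [hK1']; exact wse_rpow_ratio hS0 hs.1 (by linarith [hs.2])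
      have hid : sg y ^ e1 * sg y ^ (-e1) = 1 := by
        rw [← Real.rpow_add (wse_sg_pos y)]; simp
      calc ‖fderiv ℝ f y‖^p = (‖fderiv ℝ f y‖^p * sg y^e1) * sg y^(-e1) := by
            rw [mul_assoc, hid, mul_one]
        _ ≤ (‖fderiv ℝ f y‖^p * sg y^e1) * (K1 * S^(-e1)) :=
            mul_le_mul_of_nonneg_left hratio
              (mul_nonneg (Real.rpow_nonneg (norm_nonneg _) _)
                (Real.rpow_nonneg (wse_sg_pos y).le _))
        _ = K1 * S^b1 * (‖fderiv ℝ f y‖^p * sg y^e1) := by rw [← he1]; ring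
    have h3 : (∫⁻ z in B, (G (x + t • (z - x)))^(p:ℝ))
        ≤ ENNReal.ofReal (K1*S^b1) * ((ENNReal.ofReal (t^n))⁻¹ * I1) := by
      calc (∫⁻ z in B, (G (x + t • (z - x)))^(p:ℝ))
          ≤ ∫⁻ z in B, ENNReal.ofReal (K1*S^b1) * Wi (x + t • (z - x)) :=
            setLIntegral_mono' measurableSet_ball hpw
        _ = ENNReal.ofReal (K1*S^b1) * ∫⁻ z in B, Wi (x + t • (z - x)) :=
            lintegral_const_mul' _ _ ENNReal.ofReal_ne_top
        _ ≤ ENNReal.ofReal (K1*S^b1) * ∫⁻ z, Wi (x + t • (z - x)) := by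
            gcongr
            exact Measure.restrict_le_self
        _ = ENNReal.ofReal (K1*S^b1) * ((ENNReal.ofReal (t^n))⁻¹ * ∫⁻ y, Wi y) := by
            rw [wse_lint_homothety Wi hWm x ht0]
        _ ≤ _ := by
            gcongr
            rw [hWidef, lintegral_indicator measurableSet_ball, hI1def]
            exact lintegral_mono_set hBE
    have h4 := wse_holder_one (volume.restrict B) hpq hGφm.aemeasurable
    rw [Measure.restrict_apply_univ] at h4
    have h5 : (∫⁻ z in B, G (x + t • (z - x))) ≤
        (ENNReal.ofReal (K1*S^b1) * ((ENNReal.ofReal (t^n))⁻¹ * I1))^(1/p:ℝ)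
          * (volume B)^(1/q:ℝ) := by
      refine h4.trans ?_
      gcongr
    have htn : (ENNReal.ofReal (t^n))⁻¹ = ENNReal.ofReal (t ^ (-(n:ℝ))) := by
      rw [← Real.rpow_natCast t n,
        ← ENNReal.ofReal_inv_of_pos (Real.rpow_pos_of_pos ht0 _),
        ← Real.rpow_neg ht0.le]
    have htnp : (ENNReal.ofReal (t ^ (-(n:ℝ))))^(1/p:ℝ)
        = ENNReal.ofReal (t ^ (-((n:ℝ)/p))) := by
      rw [ENNReal.ofReal_rpow_of_pos (Real.rpow_pos_of_pos ht0 _)]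
      congr 1
      rw [← Real.rpow_mul ht0.le]
      congr 1
      ring
    calc (∫⁻ z in B, ENNReal.ofReal (2*r * ‖fderiv ℝ f (x + t • (z - x))‖))
        = ENNReal.ofReal (2*r) * ∫⁻ z in B, G (x + t • (z - x)) := h1
      _ ≤ ENNReal.ofReal (2*r) * ((ENNReal.ofReal (K1*S^b1)
            * ((ENNReal.ofReal (t^n))⁻¹ * I1))^(1/p:ℝ) * (volume B)^(1/q:ℝ)) := by
          gcongr
      _ = ENNReal.ofReal (t ^ (-((n:ℝ)/p))) * D := by
          rw [htn, hDdef,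
            ENNReal.mul_rpow_of_nonneg _ _ hpq.one_div_nonneg,
            ENNReal.mul_rpow_of_nonneg _ _ hpq.one_div_nonneg, htnp]
          ring
  -- sum over t
  have hDne : D ≠ ⊤ := by
    rw [hDdef]
    apply ENNReal.mul_ne_top
    apply ENNReal.mul_ne_top
    apply ENNReal.mul_ne_top
    · exact ENNReal.rpow_ne_top_of_nonneg hpq.one_div_nonneg ENNReal.ofReal_ne_top
    · exact hfinI1
    · exact ENNReal.rpow_ne_top_of_nonneg hpq.symm.one_div_nonneg hVt
    · exact ENNReal.ofReal_ne_top
  have hT1 : (∫⁻ t in Set.Ioc (0:ℝ) 1, ∫⁻ z in B,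
        ENNReal.ofReal (2*r * ‖fderiv ℝ f (x + t • (z - x))‖))
      ≤ ENNReal.ofReal jc * D := by
    calc (∫⁻ t in Set.Ioc (0:ℝ) 1, ∫⁻ z in B,
          ENNReal.ofReal (2*r * ‖fderiv ℝ f (x + t • (z - x))‖))
        ≤ ∫⁻ t in Set.Ioc (0:ℝ) 1, ENNReal.ofReal (t ^ (-((n:ℝ)/p))) * D :=
          setLIntegral_mono' measurableSet_Ioc hper
      _ = (∫⁻ t in Set.Ioc (0:ℝ) 1, ENNReal.ofReal (t ^ (-((n:ℝ)/p)))) * D :=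
          lintegral_mul_const' D _ hDne
      _ ≤ ENNReal.ofReal jc * D := by
          apply mul_le_mul_left
          rw [hjcdef]
          exact wse_lintegral_Ioc_rpow (by linarith)
  -- the j = 0 term
  have hT0 : (∫⁻ z in B, ENNReal.ofReal |f z|)
      ≤ (ENNReal.ofReal (K0*S^b0) * I0)^(1/p:ℝ) * (volume B)^(1/q:ℝ) := by
    have h4 := wse_holder_one (volume.restrict B) hpq hfB
    rw [Measure.restrict_apply_univ] at h4
    refine h4.trans ?_
    gcongr
    calc (∫⁻ z in B, (ENNReal.ofReal |f z|)^(p:ℝ))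
        ≤ ∫⁻ z in B, ENNReal.ofReal (K0*S^b0) * ENNReal.ofReal (|f z|^p * sg z^e0) := by
          refine setLIntegral_mono' measurableSet_ball fun z hz => ?_
          rw [ENNReal.ofReal_rpow_of_nonneg (abs_nonneg _) hp0.le,
            ← ENNReal.ofReal_mul (mul_nonneg hK0.le (Real.rpow_nonneg hS0.le _))]
          apply ENNReal.ofReal_le_ofReal
          have hs := hsgB z hz
          have hK0' : K0 = 2 ^ |(-e0)| := by rw [hK0def, ← he0]
          have hratio : sg z ^ (-e0) ≤ K0 * S ^ (-e0) := by
            rw [hK0']; exact wse_rpow_ratio hS0 hs.1 (by linarith [hs.2])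
          have hid : sg z ^ e0 * sg z ^ (-e0) = 1 := by
            rw [← Real.rpow_add (wse_sg_pos z)]; simp
          calc |f z|^p = (|f z|^p * sg z^e0) * sg z^(-e0) := by
                rw [mul_assoc, hid, mul_one]
            _ ≤ (|f z|^p * sg z^e0) * (K0 * S^(-e0)) :=
                mul_le_mul_of_nonneg_left hratio
                  (mul_nonneg (Real.rpow_nonneg (abs_nonneg _) _)
                    (Real.rpow_nonneg (wse_sg_pos z).le _))
            _ = K0 * S^b0 * (|f z|^p * sg z^e0) := by rw [← he0]; ring
      _ = ENNReal.ofReal (K0*S^b0) * ∫⁻ z in B, ENNReal.ofReal (|f z|^p * sg z^e0) :=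
          lintegral_const_mul' _ _ ENNReal.ofReal_ne_top
      _ ≤ ENNReal.ofReal (K0*S^b0) * I0 := by
          gcongr
          rw [hI0def]
          exact lintegral_mono_set hBE
  -- combine
  have hmain : volume B * ENNReal.ofReal |f x| ≤
      (ENNReal.ofReal (K0*S^b0) * I0)^(1/p:ℝ) * (volume B)^(1/q:ℝ)
        + ENNReal.ofReal jc * D :=
    hstep1.trans (add_le_add hT0 (le_trans (le_of_eq hswap) hT1))
  -- canonical scalar forms
  have hVq : (volume B)^(1/q:ℝ) = ENNReal.ofReal ((r^n*w)^(1/q)) := by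
    rw [hV, ENNReal.ofReal_rpow_of_pos (by positivity)]
  have hT0' : (ENNReal.ofReal (K0*S^b0) * I0)^(1/p:ℝ) * (volume B)^(1/q:ℝ)
      = ENNReal.ofReal ((K0*S^b0)^(1/p) * (r^n*w)^(1/q)) * I0^(1/p:ℝ) := by
    rw [ENNReal.mul_rpow_of_nonneg _ _ hpq.one_div_nonneg,
      ENNReal.ofReal_rpow_of_pos (mul_pos hK0 (Real.rpow_pos_of_pos hS0 _)), hVq,
      ENNReal.ofReal_mul (Real.rpow_nonneg (mul_nonneg hK0.le (Real.rpow_nonneg hS0.le _)) _)]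
    ring
  have hD' : D = ENNReal.ofReal ((K1*S^b1)^(1/p) * (r^n*w)^(1/q) * (2*r)) * I1^(1/p:ℝ) := by
    rw [hDdef, ENNReal.ofReal_rpow_of_pos (mul_pos hK1 (Real.rpow_pos_of_pos hS0 _)), hVq,
      ENNReal.ofReal_mul (mul_nonneg
        (Real.rpow_nonneg (mul_nonneg hK1.le (Real.rpow_nonneg hS0.le _)) _)
        (Real.rpow_nonneg (by positivity) _)),
      ENNReal.ofReal_mul (Real.rpow_nonneg (mul_nonneg hK1.le (Real.rpow_nonneg hS0.le _)) _)]
    ring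
  -- scalar inequalities
  have hkey' : S^((n:ℝ)/p) * (r^n*w)^(1/q) = c8 * (r^n*w) := by
    have hkey := wse_key_exp hp0 hq0 hq1 n hS0 hw
    rw [← hr8, ← hc8def] at hkey
    exact hkey
  have hreal0 : S^(-δ) * ((K0*S^b0)^(1/p) * (r^n*w)^(1/q)) ≤ (C0+C1) * (r^n*w) := by
    have h1 : S^(-δ) * (K0*S^b0)^(1/p) = K0^(1/p) * S^(-δ + b0*(1/p)) :=
      wse_rpow_factor hS0 hK0 hp0
    have h2 : -δ + b0*(1/p) = (n:ℝ)/p := by rw [hb0def]; field_simp; ring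
    calc S^(-δ) * ((K0*S^b0)^(1/p) * (r^n*w)^(1/q))
        = (S^(-δ) * (K0*S^b0)^(1/p)) * (r^n*w)^(1/q) := by ring
      _ = K0^(1/p) * (S^((n:ℝ)/p) * (r^n*w)^(1/q)) := by rw [h1, h2]; ring
      _ = K0^(1/p) * (c8 * (r^n*w)) := by rw [hkey']
      _ = C0 * (r^n*w) := by rw [hC0def]; ring
      _ ≤ (C0+C1) * (r^n*w) := mul_le_mul_of_nonneg_right (by linarith) (by positivity)
  have hreal1 : S^(-δ) * (jc * ((K1*S^b1)^(1/p) * (r^n*w)^(1/q) * (2*r)))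
      ≤ (C0+C1) * (r^n*w) := by
    have h1 : S^(-δ) * (K1*S^b1)^(1/p) = K1^(1/p) * S^(-δ + b1*(1/p)) :=
      wse_rpow_factor hS0 hK1 hp0
    have h2 : -δ + b1*(1/p) = (n:ℝ)/p - 1 := by rw [hb1def]; field_simp; ring
    have h3 : S^((n:ℝ)/p - 1) * (2*r) = S^((n:ℝ)/p)/4 := by
      rw [hr8, show (n:ℝ)/p - 1 = (n:ℝ)/p + (-1) by ring, Real.rpow_add hS0,
        Real.rpow_neg_one]
      field_simp
      ring
    calc S^(-δ) * (jc * ((K1*S^b1)^(1/p) * (r^n*w)^(1/q) * (2*r)))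
        = jc * ((S^(-δ) * (K1*S^b1)^(1/p)) * (2*r)) * (r^n*w)^(1/q) := by ring
      _ = jc * (K1^(1/p) * (S^((n:ℝ)/p - 1) * (2*r))) * (r^n*w)^(1/q) := by
          rw [h1, h2]; ring
      _ = (jc/4) * K1^(1/p) * (S^((n:ℝ)/p) * (r^n*w)^(1/q)) := by rw [h3]; ring
      _ = (jc/4) * K1^(1/p) * (c8 * (r^n*w)) := by rw [hkey']
      _ = C1 * (r^n*w) := by rw [hC1def]; ring
      _ ≤ (C0+C1) * (r^n*w) := mul_le_mul_of_nonneg_right (by linarith) (by positivity)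
  -- finish
  rw [hWnorm]
  refine (ENNReal.mul_le_mul_iff_right hV0 hVt).mp ?_
  calc volume B * ENNReal.ofReal (|f x| * S^(-δ))
      = ENNReal.ofReal (S^(-δ)) * (volume B * ENNReal.ofReal |f x|) := by
        rw [ENNReal.ofReal_mul (abs_nonneg _)]
        ring
    _ ≤ ENNReal.ofReal (S^(-δ)) *
        ((ENNReal.ofReal ((K0*S^b0)^(1/p) * (r^n*w)^(1/q)) * I0^(1/p:ℝ))
          + ENNReal.ofReal jc
            * (ENNReal.ofReal ((K1*S^b1)^(1/p) * (r^n*w)^(1/q) * (2*r)) * I1^(1/p:ℝ))) := by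
        apply mul_le_mul_right
        rw [← hT0', ← hD']
        exact hmain
    _ = ENNReal.ofReal (S^(-δ) * ((K0*S^b0)^(1/p) * (r^n*w)^(1/q))) * I0^(1/p:ℝ)
        + ENNReal.ofReal (S^(-δ) * (jc * ((K1*S^b1)^(1/p) * (r^n*w)^(1/q) * (2*r))))
            * I1^(1/p:ℝ) := by
        rw [ENNReal.ofReal_mul (by positivity : (0:ℝ) ≤ S^(-δ)),
          ENNReal.ofReal_mul (by positivity : (0:ℝ) ≤ S^(-δ)),
          ENNReal.ofReal_mul hjc.le]
        ring
    _ ≤ ENNReal.ofReal ((C0+C1) * (r^n*w)) * I0^(1/p:ℝ)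
        + ENNReal.ofReal ((C0+C1) * (r^n*w)) * I1^(1/p:ℝ) := by
        exact add_le_add (mul_le_mul_left (ENNReal.ofReal_le_ofReal hreal0) _)
          (mul_le_mul_left (ENNReal.ofReal_le_ofReal hreal1) _)
    _ = volume B * (ENNReal.ofReal (C0+C1) * (I0^(1/p:ℝ) + I1^(1/p:ℝ))) := by
        rw [ENNReal.ofReal_mul (by positivity), hV]
        ring
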